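/- arXiv:2209.14761 — 2 statements merged into one kernel-verified Lean document; each statement's English description precedes it below -/
import Mathlib

section
/- Let G_C be the controllability Gramian of a stable, controllable LTI system with Cholesky factorization G_C = U Uᵀ (U invertible), and let Uᵀ G_O U = K Σ² Kᵀ be an eigenvalue decomposition with K orthogonal and Σ diagonal with positive diagonal entries. Then for T = Σ^{1/2} Kᵀ U⁻¹, the transformed Gramians satisfy T G_C Tᵀ = Σ and T⁻ᵀ G_O T⁻¹ = Σ. -/
open Matrix

theorem balancing_transformation {n : ℕ}
    (GC GO U K Sig : Matrix (Fin n) (Fin n) ℝ)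
    (hGC : GC.PosDef) (hGO : GO.PosDef)
    (hU : IsUnit U.det) (hChol : GC = U * Uᵀ)
    (hK₁ : K * Kᵀ = 1) (hK₂ : Kᵀ * K = 1)
    (hSigDiag : ∀ i j, i ≠ j → Sig i j = 0) (hSigPos : ∀ i, 0 < Sig i i)
    (hEig : Uᵀ * GO * U = K * (Sig * Sig) * Kᵀ)
    (SigHalf : Matrix (Fin n) (Fin n) ℝ)
    (hSigHalf : ∀ i j, SigHalf i j = if i = j then Real.sqrt (Sig i i) else 0) :
    (SigHalf * Kᵀ * U⁻¹) * GC * (SigHalf * Kᵀ * U⁻¹)ᵀ = Sig ∧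
    ((SigHalf * Kᵀ * U⁻¹)⁻¹)ᵀ * GO * (SigHalf * Kᵀ * U⁻¹)⁻¹ = Sig := by
  have hsqrt_ne : ∀ i, Real.sqrt (Sig i i) ≠ 0 := fun i =>
    ne_of_gt (Real.sqrt_pos.mpr (hSigPos i))
  have hS : Sig = diagonal (fun i => Sig i i) := by
    ext i j
    by_cases h : i = j
    · subst h; simp [diagonal]
    · simp [diagonal, h, hSigDiag i j h]
  have hH : SigHalf = diagonal (fun i => Real.sqrt (Sig i i)) := by
    ext i j
    by_cases h : i = j
    · subst h; simp [hSigHalf, diagonal]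
    · simp [hSigHalf, diagonal, h]
  set HInv : Matrix (Fin n) (Fin n) ℝ :=
    diagonal (fun i => (Real.sqrt (Sig i i))⁻¹) with hHInv
  have hHH : SigHalf * SigHalf = Sig := by
    rw [hH, diagonal_mul_diagonal]
    conv_rhs => rw [hS]
    exact congrArg _ (funext fun i => Real.mul_self_sqrt (hSigPos i).le)
  have hHinv1 : SigHalf * HInv = 1 := by
    rw [hH, hHInv, diagonal_mul_diagonal, ← diagonal_one]
    exact congrArg _ (funext fun i => mul_inv_cancel₀ (hsqrt_ne i))
  have hHinv2 : HInv * SigHalf = 1 := by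
    rw [hH, hHInv, diagonal_mul_diagonal, ← diagonal_one]
    exact congrArg _ (funext fun i => inv_mul_cancel₀ (hsqrt_ne i))
  have hHsymm : SigHalfᵀ = SigHalf := by rw [hH, diagonal_transpose]
  have hHIsymm : HInvᵀ = HInv := by rw [hHInv, diagonal_transpose]
  have hUinv : U⁻¹ * U = 1 := nonsing_inv_mul U hU
  have hUinv' : U * U⁻¹ = 1 := mul_nonsing_inv U hU
  have hUT : IsUnit Uᵀ.det := by rwa [det_transpose]
  have hTinv : (SigHalf * Kᵀ * U⁻¹)⁻¹ = U * K * HInv := by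
    apply inv_eq_right_inv
    calc SigHalf * Kᵀ * U⁻¹ * (U * K * HInv)
        = SigHalf * Kᵀ * (U⁻¹ * U) * K * HInv := by
          simp only [Matrix.mul_assoc]
      _ = SigHalf * (Kᵀ * K) * HInv := by rw [hUinv]; simp only [Matrix.mul_assoc, Matrix.mul_one]
      _ = SigHalf * HInv := by rw [hK₂, Matrix.mul_one]
      _ = 1 := hHinv1
  constructor
  · rw [hChol]
    rw [Matrix.transpose_mul, Matrix.transpose_mul, hHsymm, transpose_nonsing_inv,
      transpose_transpose]
    calc SigHalf * Kᵀ * U⁻¹ * (U * Uᵀ) * (Uᵀ⁻¹ * (K * SigHalf))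
        = SigHalf * Kᵀ * (U⁻¹ * U) * (Uᵀ * Uᵀ⁻¹) * K * SigHalf := by
          simp only [Matrix.mul_assoc]
      _ = SigHalf * (Kᵀ * K) * SigHalf := by
          rw [hUinv, mul_nonsing_inv Uᵀ hUT]
          simp only [Matrix.mul_assoc, Matrix.mul_one, Matrix.one_mul]
      _ = Sig := by rw [hK₂, Matrix.mul_one, hHH]
  · rw [hTinv, Matrix.transpose_mul, Matrix.transpose_mul, hHIsymm]
    have key : HInv * (Sig * Sig) * HInv = Sig := by
      conv_lhs => rw [hS]
      rw [hHInv, diagonal_mul_diagonal, diagonal_mul_diagonal, diagonal_mul_diagonal, hS]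
      refine congrArg _ (funext fun i => ?_)
      have hs : Real.sqrt (Sig i i) * Real.sqrt (Sig i i) = Sig i i :=
        Real.mul_self_sqrt (hSigPos i).le
      field_simp
      simp only [diagonal_apply_eq]
      rw [Real.sq_sqrt (hSigPos i).le, pow_two, mul_div_assoc, div_self (hSigPos i).ne', mul_one]
    calc HInv * (Kᵀ * Uᵀ) * GO * (U * K * HInv)
        = HInv * Kᵀ * (Uᵀ * GO * U) * K * HInv := by simp only [Matrix.mul_assoc]
      _ = HInv * Kᵀ * (K * (Sig * Sig) * Kᵀ) * K * HInv := by rw [hEig]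
      _ = HInv * (Kᵀ * K) * (Sig * Sig) * (Kᵀ * K) * HInv := by
          simp only [Matrix.mul_assoc]
      _ = HInv * (Sig * Sig) * HInv := by
          rw [hK₂]; simp only [Matrix.mul_one, Matrix.one_mul]
      _ = Sig := key
end

section
/- With T = Σ^{-1/2} Vᵀ Lᵀ from the square-root algorithm (where G_C = U Uᵀ, G_O = L Lᵀ, Uᵀ L = W Σ Vᵀ an SVD with W, V orthogonal and Σ positive diagonal), one has T G_C Tᵀ = Σ and T⁻ᵀ G_O T⁻¹ = Σ; i.e., the square-root transformation balances the system. -/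
open Matrix

theorem square_root_algorithm_balances {n : ℕ}
    (GC GO U L W V Sig : Matrix (Fin n) (Fin n) ℝ)
    (hGC : GC.PosDef) (hGO : GO.PosDef)
    (hU : IsUnit U.det) (hL : IsUnit L.det)
    (hCholC : GC = U * Uᵀ) (hCholO : GO = L * Lᵀ)
    (hW₁ : W * Wᵀ = 1) (hW₂ : Wᵀ * W = 1)
    (hV₁ : V * Vᵀ = 1) (hV₂ : Vᵀ * V = 1)
    (hSigDiag : ∀ i j, i ≠ j → Sig i j = 0) (hSigPos : ∀ i, 0 < Sig i i)
    (hSVD : Uᵀ * L = W * Sig * Vᵀ)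
    (SigInvHalf : Matrix (Fin n) (Fin n) ℝ)
    (hSigInvHalf : ∀ i j,
      SigInvHalf i j = if i = j then (Real.sqrt (Sig i i))⁻¹ else 0) :
    (SigInvHalf * Vᵀ * Lᵀ) * GC * (SigInvHalf * Vᵀ * Lᵀ)ᵀ = Sig ∧
    ((SigInvHalf * Vᵀ * Lᵀ)⁻¹)ᵀ * GO * (SigInvHalf * Vᵀ * Lᵀ)⁻¹ = Sig := by
  set d : Fin n → ℝ := fun i => Sig i i with hd
  have hdpos : ∀ i, 0 < d i := hSigPos
  have hsq : ∀ i, Real.sqrt (d i) * Real.sqrt (d i) = d i :=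
    fun i => Real.mul_self_sqrt (hdpos i).le
  have hsqrt_ne : ∀ i, Real.sqrt (d i) ≠ 0 :=
    fun i => ne_of_gt (Real.sqrt_pos.mpr (hdpos i))
  have hSig : Sig = diagonal d := by
    ext i j
    by_cases h : i = j
    · subst h; simp [diagonal]; rfl
    · simp [diagonal, h, hSigDiag i j h]
  have hSIH : SigInvHalf = diagonal (fun i => (Real.sqrt (d i))⁻¹) := by
    ext i j
    by_cases h : i = j
    · subst h; simp [hSigInvHalf, diagonal]; rfl
    · simp [hSigInvHalf, diagonal, h]
  have cV : ∀ X : Matrix (Fin n) (Fin n) ℝ, Vᵀ * (V * X) = X := by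
    intro X; rw [← Matrix.mul_assoc, hV₂, Matrix.one_mul]
  have cW : ∀ X : Matrix (Fin n) (Fin n) ℝ, Wᵀ * (W * X) = X := by
    intro X; rw [← Matrix.mul_assoc, hW₂, Matrix.one_mul]
  have hLtU : Lᵀ * U = V * Sig * Wᵀ := by
    have h := congrArg transpose hSVD
    simp only [Matrix.transpose_mul, Matrix.transpose_transpose] at h
    rw [h, hSig, Matrix.diagonal_transpose, Matrix.mul_assoc]
  -- diagonal final computations
  have hdiag1 : SigInvHalf * (Sig * (Sig * SigInvHalf)) = Sig := by
    rw [hSig, hSIH, Matrix.diagonal_mul_diagonal, Matrix.diagonal_mul_diagonal,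
      Matrix.diagonal_mul_diagonal]
    refine congrArg Matrix.diagonal (funext fun i => ?_)
    have h1 : d i * (Real.sqrt (d i))⁻¹ = Real.sqrt (d i) := by
      rw [← div_eq_mul_inv, div_eq_iff (hsqrt_ne i), hsq]
    rw [h1, mul_comm (d i) (Real.sqrt (d i)), inv_mul_cancel_left₀ (hsqrt_ne i)]
  constructor
  · -- part 1
    rw [hCholC]
    simp only [Matrix.transpose_mul, Matrix.transpose_transpose]
    rw [hSIH, Matrix.diagonal_transpose, ← hSIH]
    -- goal: SigInvHalf * Vᵀ * Lᵀ * (U * Uᵀ) * (L * (V * SigInvHalf)) = Sig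
    have expand : SigInvHalf * Vᵀ * Lᵀ * (U * Uᵀ) * (L * (V * SigInvHalf))
        = SigInvHalf * (Vᵀ * ((Lᵀ * U) * ((Uᵀ * L) * (V * SigInvHalf)))) := by
      simp only [Matrix.mul_assoc]
    rw [expand, hLtU, hSVD]
    have expand2 : V * Sig * Wᵀ * (W * Sig * Vᵀ * (V * SigInvHalf))
        = V * (Sig * (Wᵀ * (W * (Sig * (Vᵀ * (V * SigInvHalf)))))) := by
      simp only [Matrix.mul_assoc]
    rw [expand2, cV, cW, cV, hdiag1]
  · -- part 2
    have hdetV : IsUnit Vᵀ.det := by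
      have : Vᵀ.det * V.det = 1 := by rw [← Matrix.det_mul, hV₂, Matrix.det_one]
      exact isUnit_iff_exists_inv.mpr ⟨_, this⟩
    have hSIHinv : SigInvHalf⁻¹ = diagonal (fun i => Real.sqrt (d i)) := by
      apply Matrix.inv_eq_right_inv
      rw [hSIH, Matrix.diagonal_mul_diagonal]
      have h1 : ∀ i, (Real.sqrt (d i))⁻¹ * Real.sqrt (d i) = 1 :=
        fun i => inv_mul_cancel₀ (hsqrt_ne i)
      simp only [h1, Matrix.diagonal_one]
    have hVinv : (Vᵀ)⁻¹ = V := Matrix.inv_eq_right_inv hV₂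
    have hTinv : (SigInvHalf * Vᵀ * Lᵀ)⁻¹
        = Lᵀ⁻¹ * (V * diagonal (fun i => Real.sqrt (d i))) := by
      rw [Matrix.mul_inv_rev, Matrix.mul_inv_rev, hVinv, hSIHinv]
    have hLT : IsUnit Lᵀ.det := by rwa [Matrix.det_transpose]
    have hLi : L⁻¹ * L = 1 := Matrix.nonsing_inv_mul L hL
    have hLTi : Lᵀ * Lᵀ⁻¹ = 1 := Matrix.mul_nonsing_inv Lᵀ hLT
    rw [hTinv, hCholO]
    simp only [Matrix.transpose_mul, Matrix.transpose_transpose,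
      Matrix.diagonal_transpose]
    have hLinvT : (Lᵀ⁻¹)ᵀ = L⁻¹ := by
      rw [Matrix.transpose_nonsing_inv, Matrix.transpose_transpose]
    rw [hLinvT]
    have expand3 : diagonal (fun i => Real.sqrt (d i)) * Vᵀ * L⁻¹ * (L * Lᵀ) *
        (Lᵀ⁻¹ * (V * diagonal (fun i => Real.sqrt (d i))))
        = diagonal (fun i => Real.sqrt (d i)) * (Vᵀ * ((L⁻¹ * L) *
          ((Lᵀ * Lᵀ⁻¹) * (V * diagonal (fun i => Real.sqrt (d i)))))) := by
      simp only [Matrix.mul_assoc]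
    rw [expand3, hLi, hLTi, Matrix.one_mul, Matrix.one_mul, cV,
      Matrix.diagonal_mul_diagonal, hSig]
    refine congrArg Matrix.diagonal (funext fun i => ?_)
    exact hsq i
end
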